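/- Let G be a finite simple graph and let f, g : G → G be graph homomorphisms whose supports supp(f) = {x : f x ≠ x} and supp(g) = {y : g y ≠ y} are nonempty and disconnected, meaning they are disjoint and no edge of G joins a vertex of supp(f) to a vertex of supp(g). Then there exists a family P : V(G) → V(G) → Matrix (Fin 2) (Fin 2) ℂ of self-adjoint idempotent matrices such that ∑_{y} P x y = 1 for every x, P x y · P x' y' = 0 whenever x is adjacent to x' and y is not adjacent to y', P x b · P x' b' = P x' b' · P x b whenever x is adjacent to x', and there exist x, y, b, b' ∈ V(G) with P x b · P y b' ≠ P y b' · P x b. -/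
import Mathlib


open Matrix

noncomputable def pM : Matrix (Fin 2) (Fin 2) ℂ := !![1,0;0,0]
noncomputable def qM : Matrix (Fin 2) (Fin 2) ℂ := !![1/2,1/2;1/2,1/2]

lemma pM_conj : pMᴴ = pM := by
  ext i j; fin_cases i <;> fin_cases j <;> simp [pM, Matrix.conjTranspose_apply]

lemma qM_conj : qMᴴ = qM := by
  ext i j; fin_cases i <;> fin_cases j <;> simp [qM, Matrix.conjTranspose_apply]

lemma pM_idem : pM * pM = pM := by
  ext i j; fin_cases i <;> fin_cases j <;> simp [pM, Matrix.mul_apply, Fin.sum_univ_two]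

lemma qM_idem : qM * qM = qM := by
  ext i j; fin_cases i <;> fin_cases j <;> simp [qM, Matrix.mul_apply, Fin.sum_univ_two] <;> norm_num

lemma pq_ne : pM * qM ≠ qM * pM := by
  intro h
  have := congrFun (congrFun h 0) 1
  simp [pM, qM, Matrix.mul_apply, Fin.sum_univ_two] at this

section aux
variable {R : Type*} [Ring R] {A : R}

lemma compl_idem (h : A * A = A) : (1 - A) * (1 - A) = 1 - A := by
  simp [mul_sub, sub_mul, h]

lemma mul_compl (h : A * A = A) : A * (1 - A) = 0 := by
  simp [mul_sub, h]

lemma compl_mul (h : A * A = A) : (1 - A) * A = 0 := by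
  simp [sub_mul, h]

lemma sum_pair {V : Type*} [Fintype V] [DecidableEq V] {M : Type*} [AddCommMonoid M]
    {a b : V} (hab : a ≠ b) (A B : M) :
    ∑ y : V, (if y = a then A else if y = b then B else 0) = A + B := by
  have key : ∀ y : V, (if y = a then A else if y = b then B else 0)
      = (if y = a then A else 0) + (if y = b then B else 0) := by
    intro y
    by_cases h1 : y = a
    · subst h1; simp [hab]
    · by_cases h2 : y = b <;> simp [h1, h2, Ne.symm hab]
  rw [Finset.sum_congr rfl (fun y _ => key y), Finset.sum_add_distrib]
  simp [Finset.sum_ite_eq']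
end aux

/-- Schmidt criterion for endomorphisms, part (b): if a finite
simple graph `G` has two endomorphisms `f, g` with nonempty disconnected
supports (disjoint, and no edge of `G` joins them), then `G` admits a
non-classical two-dimensional oracular quantum endomorphism: there is a family
`P : V(G) → V(G) → M₂(ℂ)` of self-adjoint idempotents satisfying the relations
of `End^{o+}(G)` (rows sum to `1`; `P x y * P x' y' = 0` whenever `x ~ x'` and
`y ≁ y'`; and `P x b` commutes with `P x' b'` whenever `x ~ x'`) containing a
non-commuting pair. -/
theorem stmt19 {V : Type*} [Fintype V] (G : SimpleGraph V)
    (f g : G →g G)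
    (hf : ∃ x, f x ≠ x) (hg : ∃ y, g y ≠ y)
    (hdisj : ∀ x, f x ≠ x → g x = x)
    (hdisc : ∀ x y, f x ≠ x → g y ≠ y → ¬ G.Adj x y) :
    ∃ P : V → V → Matrix (Fin 2) (Fin 2) ℂ,
      (∀ x y, (P x y)ᴴ = P x y ∧ P x y * P x y = P x y) ∧
      (∀ x, ∑ y : V, P x y = 1) ∧
      (∀ x x' y y', G.Adj x x' → ¬ G.Adj y y' → P x y * P x' y' = 0) ∧
      (∀ x x' b b', G.Adj x x' → P x b * P x' b' = P x' b' * P x b) ∧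
      (∃ x y b b', P x b * P y b' ≠ P y b' * P x b) := by
  classical
  obtain ⟨x₀, hx₀⟩ := hf
  obtain ⟨y₀, hy₀⟩ := hg
  have hpC := mul_compl pM_idem
  have hCp := compl_mul pM_idem
  have hqC := mul_compl qM_idem
  have hCq := compl_mul qM_idem
  refine ⟨fun x y =>
    if f x = x then
      (if g x = x then (if y = x then 1 else 0)
       else (if y = g x then qM else if y = x then 1 - qM else 0))
    else (if y = f x then pM else if y = x then 1 - pM else 0),
    ?_, ?_, ?_, ?_, ?_⟩
  · -- self-adjoint idempotents
    intro x y
    dsimp only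
    split_ifs <;>
      refine ⟨?_, ?_⟩ <;>
        first
          | exact pM_conj | exact qM_conj | exact pM_idem | exact qM_idem
          | exact compl_idem pM_idem | exact compl_idem qM_idem
          | simp [pM_conj, qM_conj]
  · -- row sums
    intro x
    dsimp only
    split_ifs with h1 h2
    · simp [Finset.sum_ite_eq']
    · rw [sum_pair h2 qM (1 - qM)]; abel
    · rw [sum_pair h1 pM (1 - pM)]; abel
  · -- zero products on non-adjacent images
    intro x x' y y' hxx' hyy'
    dsimp only
    by_cases hfx : f x = x
    · by_cases hgx : g x = x
      · rw [if_pos hfx, if_pos hgx]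
        by_cases hfx' : f x' = x'
        · by_cases hgx' : g x' = x'
          · rw [if_pos hfx', if_pos hgx']
            split_ifs <;>
              first
                | exact zero_mul _ | exact mul_zero _
                | (subst_vars; exact absurd hxx' hyy')
          · -- x trivial, x' in supp g
            have had : G.Adj x (g x') := by
              have := g.map_adj hxx'; rwa [hgx] at this
            rw [if_pos hfx', if_neg hgx']
            split_ifs <;>
              first
                | exact zero_mul _ | exact mul_zero _
                | (subst_vars; exact absurd had hyy')
                | (subst_vars; exact absurd hxx' hyy')
        · -- x trivial, x' in supp f
          have had : G.Adj x (f x') := by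
            have := f.map_adj hxx'; rwa [hfx] at this
          rw [if_neg hfx']
          split_ifs <;>
            first
              | exact zero_mul _ | exact mul_zero _
              | (subst_vars; exact absurd had hyy')
              | (subst_vars; exact absurd hxx' hyy')
      · -- x in supp g
        rw [if_pos hfx, if_neg hgx]
        have hfx' : f x' = x' := by
          by_contra h; exact (hdisc x' x h hgx) hxx'.symm
        by_cases hgx' : g x' = x'
        · -- x' trivial
          have had : G.Adj (g x) x' := by
            have := g.map_adj hxx'; rwa [hgx'] at this
          rw [if_pos hfx', if_pos hgx']
          split_ifs <;>
            first
              | exact zero_mul _ | exact mul_zero _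
              | (subst_vars; exact absurd had hyy')
              | (subst_vars; exact absurd hxx' hyy')
        · -- x' in supp g
          have had : G.Adj (g x) (g x') := g.map_adj hxx'
          rw [if_pos hfx', if_neg hgx']
          split_ifs <;>
            first
              | exact zero_mul _ | exact mul_zero _
              | exact hqC | exact hCq
              | (subst_vars; exact absurd had hyy')
              | (subst_vars; exact absurd hxx' hyy')
    · -- x in supp f
      rw [if_neg hfx]
      have hgx' : g x' = x' := by
        by_contra h; exact (hdisc x x' hfx h) hxx'
      by_cases hfx' : f x' = x'
      · -- x' trivial
        have had : G.Adj (f x) x' := by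
          have := f.map_adj hxx'; rwa [hfx'] at this
        rw [if_pos hfx', if_pos hgx']
        split_ifs <;>
          first
            | exact zero_mul _ | exact mul_zero _
            | (subst_vars; exact absurd had hyy')
            | (subst_vars; exact absurd hxx' hyy')
      · -- x' in supp f
        have had : G.Adj (f x) (f x') := f.map_adj hxx'
        rw [if_neg hfx']
        split_ifs <;>
          first
            | exact zero_mul _ | exact mul_zero _
            | exact hpC | exact hCp
            | (subst_vars; exact absurd had hyy')
            | (subst_vars; exact absurd hxx' hyy')
  · -- commutation on adjacent vertices
    intro x x' b b' hxx'
    dsimp only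
    by_cases hfx : f x = x
    · by_cases hgx : g x = x
      · rw [if_pos hfx, if_pos hgx]
        by_cases hfx' : f x' = x'
        · by_cases hgx' : g x' = x'
          · rw [if_pos hfx', if_pos hgx']
            split_ifs <;> simp
          · rw [if_pos hfx', if_neg hgx']
            split_ifs <;> simp
        · rw [if_neg hfx']
          split_ifs <;> simp
      · rw [if_pos hfx, if_neg hgx]
        have hfx' : f x' = x' := by
          by_contra h; exact (hdisc x' x h hgx) hxx'.symm
        by_cases hgx' : g x' = x'
        · rw [if_pos hfx', if_pos hgx']
          split_ifs <;> simp
        · rw [if_pos hfx', if_neg hgx']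
          split_ifs <;>
            first
              | rfl | simp
              | rw [hqC, hCq] | rw [hCq, hqC]
    · rw [if_neg hfx]
      have hgx' : g x' = x' := by
        by_contra h; exact (hdisc x x' hfx h) hxx'
      by_cases hfx' : f x' = x'
      · rw [if_pos hfx', if_pos hgx']
        split_ifs <;> simp
      · rw [if_neg hfx']
        split_ifs <;>
          first
            | rfl | simp
            | rw [hpC, hCp] | rw [hCp, hpC]
  · -- a non-commuting pair
    have hfy₀ : f y₀ = y₀ := by
      by_contra h; exact hy₀ (hdisj y₀ h)
    refine ⟨x₀, y₀, f x₀, g y₀, ?_⟩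
    dsimp only
    rw [if_neg hx₀, if_pos rfl, if_pos hfy₀, if_neg hy₀, if_pos rfl]
    exact pq_ne
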